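/- Let M ∈ SL(2,ℂ) with |tr M| > 1, and let x ∈ ℂ² with ‖x‖ = 1. Then max(‖Mx‖, ‖M^{-1}x‖) ≥ 1/2. -/

import Mathlib

lemma inv_eq_trace_smul_sub (M : Matrix (Fin 2) (Fin 2) ℂ) (hM : M.det = 1) :
    M⁻¹ = M.trace • (1 : Matrix (Fin 2) (Fin 2) ℂ) - M := by
  rw [Matrix.inv_def, hM]
  ext i j
  fin_cases i <;> fin_cases j <;>
    simp [Matrix.adjugate_fin_two, Matrix.trace_fin_two, Matrix.one_apply]

theorem three_block_gordon_estimate (M : Matrix (Fin 2) (Fin 2) ℂ) (hM : M.det = 1)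
    (htr : ‖M.trace‖ > 1)
    (x : EuclideanSpace ℂ (Fin 2)) (hx : ‖x‖ = 1) :
    max ‖Matrix.toEuclideanLin M x‖ ‖Matrix.toEuclideanLin M⁻¹ x‖ ≥ 1 / 2 := by
  have hkey : Matrix.toEuclideanLin M x + Matrix.toEuclideanLin M⁻¹ x = M.trace • x := by
    rw [inv_eq_trace_smul_sub M hM]
    simp [map_sub, map_smul, Matrix.toEuclideanLin, Matrix.toLin'_one]
  have h1 : ‖M.trace • x‖ = ‖M.trace‖ := by
    rw [norm_smul, hx, mul_one]
  have h2 : ‖M.trace‖ ≤ ‖Matrix.toEuclideanLin M x‖ + ‖Matrix.toEuclideanLin M⁻¹ x‖ := by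
    rw [← h1, ← hkey]; exact norm_add_le _ _
  have h3 := le_max_left ‖Matrix.toEuclideanLin M x‖ ‖Matrix.toEuclideanLin M⁻¹ x‖
  have h4 := le_max_right ‖Matrix.toEuclideanLin M x‖ ‖Matrix.toEuclideanLin M⁻¹ x‖
  linarith
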